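/- Fix t > 1, α, β with 0 < α ≤ β, and a segment AB in ℝ² with dist(A,B) > 0. Let E be a family of segments PQ in ℝ² such that (i) each PQ crosses AB (intersects its interior), (ii) α·dist(A,B) ≤ dist(P,Q) ≤ β·dist(A,B) for each PQ ∈ E, and (iii) for any two distinct segments MN and PQ in E, max(dist(M,P), dist(N,Q)) ≥ ((t−1)/(2t))·min(dist(M,N), dist(P,Q)) and max(dist(M,Q), dist(N,P)) ≥ ((t−1)/(2t))·min(dist(M,N), dist(P,Q)). Then the number of segments in E is at most [ (2β(2β+1)/α²) · (8t²/(t−1)²) ]². -/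

import Mathlib

set_option maxHeartbeats 1000000

noncomputable abbrev P2 := EuclideanSpace ℝ (Fin 2)

lemma dist_sq_eq' (P Q : P2) : dist P Q ^ 2 = (P 0 - Q 0)^2 + (P 1 - Q 1)^2 := by
  rw [EuclideanSpace.dist_eq, Real.sq_sqrt (Finset.sum_nonneg fun i _ => sq_nonneg _)]
  simp [Fin.sum_univ_two, Real.dist_eq, sq_abs]

lemma floor_eq_dist_lt' {s a b : ℝ} (hs : 0 < s) (h : ⌊a/s⌋ = ⌊b/s⌋) : |a - b| < s := by
  have h1 : a/s < ⌊a/s⌋ + 1 := Int.lt_floor_add_one _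
  have h2 : (⌊a/s⌋ : ℝ) ≤ a/s := Int.floor_le _
  have h3 : b/s < ⌊b/s⌋ + 1 := Int.lt_floor_add_one _
  have h4 : (⌊b/s⌋ : ℝ) ≤ b/s := Int.floor_le _
  rw [h] at h1 h2
  have habs : |(a - b)/s| < 1 := by
    rw [sub_div, abs_sub_lt_iff]; constructor <;> linarith
  rw [abs_div, abs_of_pos hs] at habs
  exact (div_lt_one hs).mp habs

lemma main_ineq' (w c : ℝ) (hw : 2*Real.sqrt 2 ≤ w) (hc : 0 < c) :
    (w + c + 1) * ((w + 1) * ((2*w + c + 1) * (2*w + 1))) ≤ ((2*w + c) * (2*w))^2 := by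
  have hsn : (1.414:ℝ) ≤ Real.sqrt 2 := by
    rw [show (1.414:ℝ) = Real.sqrt (1.414^2) from (Real.sqrt_sq (by norm_num)).symm]
    exact Real.sqrt_le_sqrt (by norm_num)
  have hwn : (2.828:ℝ) ≤ w := by nlinarith
  have h1 : 4*((w+1)*(2*w+1)) ≤ 13*w^2 := by nlinarith
  have h2 : 13*((w+c+1)*(2*w+c+1)) ≤ 16*(2*w+c)^2 := by nlinarith
  have hprod := mul_le_mul h2 h1 (by nlinarith) (by positivity)
  nlinarith [hprod]

/-- Proposition: the number of spanner segments crossing a segment AB whose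
lengths lie between α·‖AB‖ and β·‖AB‖ is at most
[(2β(2β+1)/α²)·(8t²/(t−1)²)]². -/
theorem stmt9 (t α β : ℝ) (ht : 1 < t) (hα : 0 < α) (hαβ : α ≤ β)
    (A B : P2) (hAB : 0 < dist A B)
    (E : Finset (P2 × P2))
    (hnd : ∀ pq ∈ E, pq.1 ≠ pq.2)
    (hswap : ∀ pq ∈ E, (pq.2, pq.1) ∉ E)
    (hcross : ∀ pq ∈ E,
      (openSegment ℝ pq.1 pq.2 ∩ openSegment ℝ A B).Nonempty)
    (hlen : ∀ pq ∈ E, α * dist A B ≤ dist pq.1 pq.2 ∧ dist pq.1 pq.2 ≤ β * dist A B)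
    (hsep : ∀ mn ∈ E, ∀ pq ∈ E, mn ≠ pq →
      max (dist mn.1 pq.1) (dist mn.2 pq.2) ≥
        ((t - 1) / (2 * t)) * min (dist mn.1 mn.2) (dist pq.1 pq.2) ∧
      max (dist mn.1 pq.2) (dist mn.2 pq.1) ≥
        ((t - 1) / (2 * t)) * min (dist mn.1 mn.2) (dist pq.1 pq.2)) :
    (E.card : ℝ) ≤ ((2 * β * (2 * β + 1) / α ^ 2) * (8 * t ^ 2 / (t - 1) ^ 2)) ^ 2 := by
  classical
  set d := dist A B with hdd
  have hd : 0 < d := hAB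
  have ht0 : (0:ℝ) < t := by linarith
  have ht1 : (0:ℝ) < t - 1 := by linarith
  obtain ⟨δ, hδdef⟩ : ∃ x : ℝ, x = (t-1) * α * d / (2*t) := ⟨_, rfl⟩
  have hδ : 0 < δ := by rw [hδdef]; exact div_pos (mul_pos (mul_pos ht1 hα) hd) (by linarith)
  have hsqrt2 : (0:ℝ) < Real.sqrt 2 := by positivity
  have hsq2 : Real.sqrt 2 ^ 2 = 2 := Real.sq_sqrt (by norm_num)
  obtain ⟨s, hsdef⟩ : ∃ x : ℝ, x = δ / Real.sqrt 2 := ⟨_, rfl⟩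
  have hs : 0 < s := by rw [hsdef]; exact div_pos hδ hsqrt2
  have hs2 : 2 * s^2 = δ^2 := by
    rw [hsdef, div_pow, hsq2]; ring
  set DX := B 0 - A 0 with hDX
  set DY := B 1 - A 1 with hDY
  have hd2 : DX^2 + DY^2 = d^2 := by
    have h := dist_sq_eq' B A
    rw [dist_comm B A] at h
    rw [hDX, hDY, hdd]; linarith
  have hdne : d ≠ 0 := ne_of_gt hd
  set c1 : P2 → ℝ := fun P => (DX * (P 0 - A 0) + DY * (P 1 - A 1)) / d with hc1
  set c2 : P2 → ℝ := fun P => (-DY * (P 0 - A 0) + DX * (P 1 - A 1)) / d with hc2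
  have key : ∀ P Q : P2, (c1 P - c1 Q)^2 + (c2 P - c2 Q)^2 = dist P Q ^ 2 := by
    intro P Q
    rw [dist_sq_eq', hc1, hc2]
    simp only
    field_simp
    linear_combination ((P 0 - Q 0)^2 + (P 1 - Q 1)^2) * hd2
  have habs1 : ∀ P Q : P2, |c1 P - c1 Q| ≤ dist P Q := by
    intro P Q
    rw [← Real.sqrt_sq_eq_abs]
    calc Real.sqrt ((c1 P - c1 Q)^2) ≤ Real.sqrt (dist P Q ^ 2) := by
          apply Real.sqrt_le_sqrt; nlinarith [key P Q, sq_nonneg (c2 P - c2 Q)]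
      _ = dist P Q := Real.sqrt_sq dist_nonneg
  have habs2 : ∀ P Q : P2, |c2 P - c2 Q| ≤ dist P Q := by
    intro P Q
    rw [← Real.sqrt_sq_eq_abs]
    calc Real.sqrt ((c2 P - c2 Q)^2) ≤ Real.sqrt (dist P Q ^ 2) := by
          apply Real.sqrt_le_sqrt; nlinarith [key P Q, sq_nonneg (c1 P - c1 Q)]
      _ = dist P Q := Real.sqrt_sq dist_nonneg
  have hXcoord : ∀ Y : P2, Y ∈ openSegment ℝ A B → 0 ≤ c1 Y ∧ c1 Y ≤ d ∧ c2 Y = 0 := by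
    intro Y hY
    obtain ⟨ua, ub, hua, hub, hsum, heq⟩ := hY
    have h0 : Y 0 = ua * A 0 + ub * B 0 := by
      rw [← heq]; simp [PiLp.add_apply, PiLp.smul_apply, smul_eq_mul]
    have h1 : Y 1 = ua * A 1 + ub * B 1 := by
      rw [← heq]; simp [PiLp.add_apply, PiLp.smul_apply, smul_eq_mul]
    have e0 : Y 0 - A 0 = ub * DX := by
      rw [h0, hDX]; have h' : ua = 1 - ub := by linarith
      rw [h']; ring
    have e1 : Y 1 - A 1 = ub * DY := by
      rw [h1, hDY]; have h' : ua = 1 - ub := by linarith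
      rw [h']; ring
    have hc1Y : c1 Y = ub * d := by
      rw [hc1]; simp only; rw [e0, e1, div_eq_iff hdne]
      linear_combination ub * hd2
    have hc2Y : c2 Y = 0 := by
      rw [hc2]; simp only; rw [e0, e1]; field_simp; ring
    have hub1 : ub ≤ 1 := by linarith
    exact ⟨by rw [hc1Y]; positivity, by rw [hc1Y]; nlinarith, hc2Y⟩
  -- choice of crossing points
  have hXex : ∀ pq ∈ E, ∃ Y : P2, Y ∈ openSegment ℝ pq.1 pq.2 ∧ Y ∈ openSegment ℝ A B := by
    intro pq h
    obtain ⟨Y, h1, h2⟩ := hcross pq h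
    exact ⟨Y, h1, h2⟩
  choose! Xf hX1 hX2 using hXex
  set nr : P2 × P2 → P2 := fun pq => if dist pq.1 (Xf pq) ≤ dist pq.2 (Xf pq) then pq.1 else pq.2 with hnrdef
  set fr : P2 × P2 → P2 := fun pq => if dist pq.1 (Xf pq) ≤ dist pq.2 (Xf pq) then pq.2 else pq.1 with hfrdef
  have hcases : ∀ pq : P2 × P2, (nr pq = pq.1 ∧ fr pq = pq.2) ∨ (nr pq = pq.2 ∧ fr pq = pq.1) := by
    intro pq
    rw [hnrdef, hfrdef]; simp only
    by_cases ha : dist pq.1 (Xf pq) ≤ dist pq.2 (Xf pq)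
    · left; rw [if_pos ha, if_pos ha]; exact ⟨rfl, rfl⟩
    · right; rw [if_neg ha, if_neg ha]; exact ⟨rfl, rfl⟩
  have hsplit : ∀ pq ∈ E, dist pq.1 (Xf pq) + dist pq.2 (Xf pq) = dist pq.1 pq.2 := by
    intro pq h
    have h' := dist_add_dist_of_mem_segment (openSegment_subset_segment ℝ _ _ (hX1 pq h))
    rw [dist_comm (Xf pq) pq.2] at h'
    exact h'
  have hnr_dist : ∀ pq ∈ E, dist (nr pq) (Xf pq) ≤ β * d / 2 := by
    intro pq h
    have hl := (hlen pq h).2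
    have hsp := hsplit pq h
    rw [hnrdef]; simp only
    by_cases hc : dist pq.1 (Xf pq) ≤ dist pq.2 (Xf pq)
    · rw [if_pos hc]; linarith
    · rw [if_neg hc]; push_neg at hc; linarith
  have hfr_dist : ∀ pq ∈ E, dist (fr pq) (Xf pq) ≤ β * d := by
    intro pq h
    have hl := (hlen pq h).2
    have hsp := hsplit pq h
    rw [hfrdef]; simp only
    by_cases hc : dist pq.1 (Xf pq) ≤ dist pq.2 (Xf pq)
    · rw [if_pos hc]; linarith [dist_nonneg (x := pq.1) (y := Xf pq)]
    · rw [if_neg hc]; linarith [dist_nonneg (x := pq.2) (y := Xf pq)]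
  have hcoordP : ∀ (P Y : P2), Y ∈ openSegment ℝ A B → ∀ r : ℝ, dist P Y ≤ r →
      (-r ≤ c1 P ∧ c1 P ≤ d + r) ∧ (-r ≤ c2 P ∧ c2 P ≤ r) := by
    intro P Y hY r hr
    obtain ⟨hY0, hY1, hY2⟩ := hXcoord Y hY
    have h1 := abs_le.mp ((habs1 P Y).trans hr)
    have h2 := abs_le.mp ((habs2 P Y).trans hr)
    exact ⟨⟨by linarith, by linarith⟩, ⟨by linarith, by linarith⟩⟩
  -- the grid map
  set F : P2 × P2 → ℤ × ℤ × ℤ × ℤ := fun pq =>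
    (⌊(c1 (nr pq) + β*d/2)/s⌋, ⌊(c2 (nr pq) + β*d/2)/s⌋,
     ⌊(c1 (fr pq) + β*d)/s⌋, ⌊(c2 (fr pq) + β*d)/s⌋) with hFdef
  have hβ : 0 < β := lt_of_lt_of_le hα hαβ
  set K1 : ℤ := ⌊(β*d + d)/s⌋ with hK1
  set K2 : ℤ := ⌊β*d/s⌋ with hK2
  set K3 : ℤ := ⌊(2*(β*d) + d)/s⌋ with hK3
  set K4 : ℤ := ⌊2*(β*d)/s⌋ with hK4
  set T : Finset (ℤ×ℤ×ℤ×ℤ) :=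
    Finset.Icc 0 K1 ×ˢ (Finset.Icc 0 K2 ×ˢ (Finset.Icc 0 K3 ×ˢ Finset.Icc 0 K4)) with hT
  have hmem : ∀ pq ∈ E, F pq ∈ T := by
    intro pq h
    obtain ⟨⟨hn1, hn2⟩, hn3, hn4⟩ := hcoordP (nr pq) (Xf pq) (hX2 pq h) (β*d/2) (hnr_dist pq h)
    obtain ⟨⟨hf1, hf2⟩, hf3, hf4⟩ := hcoordP (fr pq) (Xf pq) (hX2 pq h) (β*d) (hfr_dist pq h)
    rw [hFdef, hT]
    simp only [Finset.mem_product, Finset.mem_Icc]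
    refine ⟨⟨?_, ?_⟩, ⟨?_, ?_⟩, ⟨?_, ?_⟩, ?_, ?_⟩
    · exact Int.floor_nonneg.mpr (div_nonneg (by linarith) hs.le)
    · rw [hK1]; exact Int.floor_le_floor ((div_le_div_iff_of_pos_right hs).mpr (by linarith))
    · exact Int.floor_nonneg.mpr (div_nonneg (by linarith) hs.le)
    · rw [hK2]; exact Int.floor_le_floor ((div_le_div_iff_of_pos_right hs).mpr (by linarith))
    · exact Int.floor_nonneg.mpr (div_nonneg (by linarith) hs.le)
    · rw [hK3]; exact Int.floor_le_floor ((div_le_div_iff_of_pos_right hs).mpr (by linarith))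
    · exact Int.floor_nonneg.mpr (div_nonneg (by linarith) hs.le)
    · rw [hK4]; exact Int.floor_le_floor ((div_le_div_iff_of_pos_right hs).mpr (by linarith))
  have hdltδ : ∀ x y : P2, |c1 x - c1 y| < s → |c2 x - c2 y| < s → dist x y < δ := by
    intro x y h1 h2
    have hk := key x y
    have hsqlt : dist x y ^ 2 < δ ^ 2 := by
      rw [← hk, ← hs2]
      nlinarith [abs_nonneg (c1 x - c1 y), abs_nonneg (c2 x - c2 y),
        sq_abs (c1 x - c1 y), sq_abs (c2 x - c2 y)]
    exact lt_of_pow_lt_pow_left₀ 2 hδ.le hsqlt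
  have hinj : Set.InjOn F ↑E := by
    intro pq hpq mn hmn hFeq
    by_contra hne
    have hpq' : pq ∈ E := hpq
    have hmn' : mn ∈ E := hmn
    have e1 : ⌊(c1 (nr pq) + β*d/2)/s⌋ = ⌊(c1 (nr mn) + β*d/2)/s⌋ := congrArg (fun z => z.1) hFeq
    have e2 : ⌊(c2 (nr pq) + β*d/2)/s⌋ = ⌊(c2 (nr mn) + β*d/2)/s⌋ := congrArg (fun z => z.2.1) hFeq
    have e3 : ⌊(c1 (fr pq) + β*d)/s⌋ = ⌊(c1 (fr mn) + β*d)/s⌋ := congrArg (fun z => z.2.2.1) hFeq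
    have e4 : ⌊(c2 (fr pq) + β*d)/s⌋ = ⌊(c2 (fr mn) + β*d)/s⌋ := congrArg (fun z => z.2.2.2) hFeq
    have d1 : dist (nr pq) (nr mn) < δ := by
      apply hdltδ
      · have h' := floor_eq_dist_lt' hs e1
        rwa [add_sub_add_right_eq_sub] at h'
      · have h' := floor_eq_dist_lt' hs e2
        rwa [add_sub_add_right_eq_sub] at h'
    have d2 : dist (fr pq) (fr mn) < δ := by
      apply hdltδ
      · have h' := floor_eq_dist_lt' hs e3
        rwa [add_sub_add_right_eq_sub] at h'
      · have h' := floor_eq_dist_lt' hs e4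
        rwa [add_sub_add_right_eq_sub] at h'
    have hρ : δ ≤ (t-1)/(2*t) * min (dist pq.1 pq.2) (dist mn.1 mn.2) := by
      have l1 := (hlen pq hpq').1
      have l2 := (hlen mn hmn').1
      have hmin : α * d ≤ min (dist pq.1 pq.2) (dist mn.1 mn.2) := le_min l1 l2
      have hpos : (0:ℝ) ≤ (t-1)/(2*t) := le_of_lt (div_pos ht1 (by linarith))
      calc δ = (t-1)/(2*t) * (α * d) := by rw [hδdef]; ring
        _ ≤ _ := mul_le_mul_of_nonneg_left hmin hpos
    obtain ⟨hsA, hsB⟩ := hsep pq hpq' mn hmn' hne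
    rcases hcases pq with ⟨ea, eb⟩ | ⟨ea, eb⟩ <;> rcases hcases mn with ⟨ec, ed⟩ | ⟨ec, ed⟩ <;>
        rw [ea, ec] at d1 <;> rw [eb, ed] at d2
    · linarith [max_lt d1 d2]
    · linarith [max_lt d1 d2]
    · linarith [max_lt d2 d1]
    · linarith [max_lt d2 d1]
  have hcard : E.card ≤ T.card := Finset.card_le_card_of_injOn F hmem hinj
  have hK1n : (0:ℤ) ≤ K1 := by
    rw [hK1]; exact Int.floor_nonneg.mpr (div_nonneg (by positivity) hs.le)
  have hK2n : (0:ℤ) ≤ K2 := by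
    rw [hK2]; exact Int.floor_nonneg.mpr (div_nonneg (by positivity) hs.le)
  have hK3n : (0:ℤ) ≤ K3 := by
    rw [hK3]; exact Int.floor_nonneg.mpr (div_nonneg (by positivity) hs.le)
  have hK4n : (0:ℤ) ≤ K4 := by
    rw [hK4]; exact Int.floor_nonneg.mpr (div_nonneg (by positivity) hs.le)
  have hTval : (T.card : ℝ) = ((K1:ℝ)+1) * (((K2:ℝ)+1) * (((K3:ℝ)+1) * ((K4:ℝ)+1))) := by
    have c1' : (((1+K1).toNat : ℕ) : ℝ) = 1 + (K1:ℝ) := by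
      exact_mod_cast congrArg (Int.cast : ℤ → ℝ) (Int.toNat_of_nonneg (show (0:ℤ) ≤ 1+K1 by linarith))
    have c2' : (((1+K2).toNat : ℕ) : ℝ) = 1 + (K2:ℝ) := by
      exact_mod_cast congrArg (Int.cast : ℤ → ℝ) (Int.toNat_of_nonneg (show (0:ℤ) ≤ 1+K2 by linarith))
    have c3' : (((1+K3).toNat : ℕ) : ℝ) = 1 + (K3:ℝ) := by
      exact_mod_cast congrArg (Int.cast : ℤ → ℝ) (Int.toNat_of_nonneg (show (0:ℤ) ≤ 1+K3 by linarith))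
    have c4' : (((1+K4).toNat : ℕ) : ℝ) = 1 + (K4:ℝ) := by
      exact_mod_cast congrArg (Int.cast : ℤ → ℝ) (Int.toNat_of_nonneg (show (0:ℤ) ≤ 1+K4 by linarith))
    rw [hT]
    simp only [Finset.card_product, Int.card_Icc, sub_zero]
    push_cast
    rw [show K1 + 1 = 1 + K1 from by ring, show K2 + 1 = 1 + K2 from by ring,
        show K3 + 1 = 1 + K3 from by ring, show K4 + 1 = 1 + K4 from by ring]
    rw [c1', c2', c3', c4']
    ring
  obtain ⟨w, hwdef⟩ : ∃ x : ℝ, x = β*d/s := ⟨_, rfl⟩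
  obtain ⟨cc, hccdef⟩ : ∃ x : ℝ, x = d/s := ⟨_, rfl⟩
  have hcc : 0 < cc := by rw [hccdef]; exact div_pos hd hs
  have hwpos : 0 < w := by rw [hwdef]; positivity
  have hb1 : (K1:ℝ) ≤ w + cc := by
    rw [hK1, hwdef, hccdef]
    calc ((⌊(β*d + d)/s⌋ : ℤ) : ℝ) ≤ (β*d + d)/s := Int.floor_le _
      _ = β*d/s + d/s := by ring
  have hb2 : (K2:ℝ) ≤ w := by rw [hK2, hwdef]; exact Int.floor_le _
  have hb3 : (K3:ℝ) ≤ 2*w + cc := by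
    rw [hK3, hwdef, hccdef]
    calc ((⌊(2*(β*d) + d)/s⌋ : ℤ) : ℝ) ≤ (2*(β*d) + d)/s := Int.floor_le _
      _ = 2*(β*d/s) + d/s := by ring
  have hb4 : (K4:ℝ) ≤ 2*w := by
    rw [hK4, hwdef]
    calc ((⌊2*(β*d)/s⌋ : ℤ) : ℝ) ≤ 2*(β*d)/s := Int.floor_le _
      _ = 2*(β*d/s) := by ring
  have hK1r : (0:ℝ) ≤ (K1:ℝ) := by exact_mod_cast hK1n
  have hK2r : (0:ℝ) ≤ (K2:ℝ) := by exact_mod_cast hK2n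
  have hK3r : (0:ℝ) ≤ (K3:ℝ) := by exact_mod_cast hK3n
  have hK4r : (0:ℝ) ≤ (K4:ℝ) := by exact_mod_cast hK4n
  have hEle : (E.card : ℝ) ≤ (w + cc + 1) * ((w + 1) * ((2*w + cc + 1) * (2*w + 1))) := by
    calc (E.card : ℝ) ≤ (T.card : ℝ) := by exact_mod_cast hcard
      _ = ((K1:ℝ)+1) * (((K2:ℝ)+1) * (((K3:ℝ)+1) * ((K4:ℝ)+1))) := hTval
      _ ≤ (w + cc + 1) * ((w + 1) * ((2*w + cc + 1) * (2*w + 1))) := by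
          apply mul_le_mul (by linarith) _ (by positivity) (by linarith)
          apply mul_le_mul (by linarith) _ (by positivity) (by linarith)
          apply mul_le_mul (by linarith) (by linarith) (by positivity) (by linarith)
  have hw2 : 2*Real.sqrt 2 ≤ w := by
    rw [hwdef, le_div_iff₀ hs]
    have e : 2*Real.sqrt 2 * s = 2*δ := by
      rw [hsdef]
      field_simp
    rw [e]
    have e2 : 2*δ = (t-1)*α*d/t := by
      rw [hδdef]; field_simp
    rw [e2, div_le_iff₀ ht0]
    nlinarith [mul_le_mul_of_nonneg_right (show (t-1)*α ≤ β*t by nlinarith) hd.le]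
  have hfin := main_ineq' w cc hw2 hcc
  -- identify the right-hand side
  have hδsq : (2*t)^2*δ^2 = ((t-1)*α*d)^2 := by
    rw [hδdef]
    field_simp
  have hs2'' : 8*t^2*s^2 = (t-1)^2*α^2*d^2 := by
    linear_combination (4*t^2)*hs2 + hδsq
  have hds2 : d^2/s^2 = 8*t^2/((t-1)^2*α^2) := by
    rw [eq_div_iff (ne_of_gt (show (0:ℝ) < (t-1)^2*α^2 by positivity)),
        div_mul_eq_mul_div, div_eq_iff (ne_of_gt (show (0:ℝ) < s^2 by positivity))]
    linear_combination -hs2''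
  have hprod_eq : (2*w + cc) * (2*w) = 2 * β * (2 * β + 1) / α ^ 2 * (8 * t ^ 2 / (t - 1) ^ 2) := by
    rw [hwdef, hccdef]
    calc (2*(β*d/s) + d/s) * (2*(β*d/s)) = (2*β*(2*β+1)) * (d^2/s^2) := by ring
      _ = 2 * β * (2 * β + 1) / α ^ 2 * (8 * t ^ 2 / (t - 1) ^ 2) := by rw [hds2]; field_simp
  calc (E.card : ℝ) ≤ (w + cc + 1) * ((w + 1) * ((2*w + cc + 1) * (2*w + 1))) := hEle
    _ ≤ ((2*w + cc) * (2*w))^2 := hfin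
    _ = (2 * β * (2 * β + 1) / α ^ 2 * (8 * t ^ 2 / (t - 1) ^ 2)) ^ 2 := by rw [hprod_eq]
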